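/- arXiv:2205.00482 — 10 statements merged into one kernel-verified Lean document; each statement's English description precedes it below -/
import Mathlib

section
/- Let x, y, n be integers with gcd(x, y) = 1. Then the following two conditions are equivalent: (i) there exist integers a, b with n = ay − bx, gcd(x, a) = 1 and gcd(y, b) = 1; (ii) gcd(x, n) = 1 and gcd(y, n) = 1. -/
/-- For coprime integers `x, y` and any integer `n`, the existence of
`a, b` with `n = a*y - b*x`, `gcd(x,a) = 1` and `gcd(y,b) = 1` is equivalent to
`gcd(x,n) = 1` and `gcd(y,n) = 1`. -/
theorem stmt_1 (x y n : ℤ) (hxy : Int.gcd x y = 1) :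
    (∃ a b : ℤ, n = a * y - b * x ∧ Int.gcd x a = 1 ∧ Int.gcd y b = 1) ↔
      (Int.gcd x n = 1 ∧ Int.gcd y n = 1) := by
  rw [← Int.isCoprime_iff_gcd_eq_one] at hxy
  simp only [← Int.isCoprime_iff_gcd_eq_one]
  constructor
  · rintro ⟨a, b, rfl, hxa, hyb⟩
    constructor
    · have h1 : IsCoprime x (a * y) := hxa.mul_right hxy
      have h2 : IsCoprime x (a * y + x * (-b)) := h1.add_mul_left_right (-b)
      have : a * y + x * (-b) = a * y - b * x := by ring
      rwa [this] at h2
    · have h1 : IsCoprime y ((-b) * x) := hyb.neg_right.mul_right hxy.symm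
      have h2 : IsCoprime y ((-b) * x + y * a) := h1.add_mul_left_right a
      have : (-b) * x + y * a = a * y - b * x := by ring
      rwa [this] at h2
  · rintro ⟨hxn, hyn⟩
    obtain ⟨u, v, huv⟩ := hxy
    refine ⟨n * v, -(n * u), ?_, ?_, ?_⟩
    · have : n * v * y - -(n * u) * x = n * (u * x + v * y) := by ring
      rw [this, huv, mul_one]
    · have h2 : IsCoprime x (n + x * (-(n * u))) := hxn.add_mul_left_right _
      have he : n + x * (-(n * u)) = (n * v) * y := by
        have : n * (u * x + v * y) = n * 1 := by rw [huv]
        linarith [this]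
      rw [he] at h2
      exact h2.of_mul_right_left
    · have h2 : IsCoprime y (n + y * (-(n * v))) := hyn.add_mul_left_right _
      have he : n + y * (-(n * v)) = (-(n * u)) * (-x) := by
        have : n * (u * x + v * y) = n * 1 := by rw [huv]
        linarith [this]
      rw [he] at h2
      exact h2.of_mul_right_left
end

section
/- Let n ∈ ℤ and δ₁, δ₂, ε ∈ {1, −1}. If (x, y) ∈ S^{δ₂,δ₁}_{n,ε}, then both mutations (−x − nδ₂y, y) and (x, −y − nδ₁x) also belong to S^{δ₂,δ₁}_{n,ε}. -/
/-- The set `S^{δ₂,δ₁}_{n,ε}` of pairs `(x,y) ∈ ℤ²` with `δ₂x² + δ₁y² + nxy = ε`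
and `gcd(x,n) = gcd(y,n) = 1`. -/
def Sset (n δ₂ δ₁ ε : ℤ) : Set (ℤ × ℤ) :=
  {p | δ₂ * p.1 ^ 2 + δ₁ * p.2 ^ 2 + n * p.1 * p.2 = ε ∧
    Int.gcd p.1 n = 1 ∧ Int.gcd p.2 n = 1}

lemma gcd_mut (x n c : ℤ) (h : Int.gcd x n = 1) : Int.gcd (-x - n * c) n = 1 := by
  rw [← Int.isCoprime_iff_gcd_eq_one] at h ⊢
  have h2 : IsCoprime (-x + n * -c) n := (h.neg_left).add_mul_left_left (-c)
  have : -x - n * c = -x + n * -c := by ring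
  rwa [this]

/-- the two mutations of an element of `S^{δ₂,δ₁}_{n,ε}` belong to
`S^{δ₂,δ₁}_{n,ε}`. -/
theorem stmt_2 (n δ₁ δ₂ ε x y : ℤ)
    (hδ₁ : δ₁ = 1 ∨ δ₁ = -1) (hδ₂ : δ₂ = 1 ∨ δ₂ = -1) (hε : ε = 1 ∨ ε = -1)
    (hxy : (x, y) ∈ Sset n δ₂ δ₁ ε) :
    (-x - n * δ₂ * y, y) ∈ Sset n δ₂ δ₁ ε ∧
      (x, -y - n * δ₁ * x) ∈ Sset n δ₂ δ₁ ε := by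
  obtain ⟨heq, hx, hy⟩ := hxy
  refine ⟨⟨?_, ?_, hy⟩, ⟨?_, hx, ?_⟩⟩
  · rcases hδ₂ with h | h <;> subst h <;> linear_combination heq
  · have := gcd_mut x n (δ₂ * y) hx
    rwa [show -x - n * (δ₂ * y) = -x - n * δ₂ * y by ring] at this
  · rcases hδ₁ with h | h <;> subst h <;> linear_combination heq
  · have := gcd_mut y n (δ₁ * x) hy
    rwa [show -y - n * (δ₁ * x) = -y - n * δ₁ * x by ring] at this
end

section
/- Let n ∈ ℤ and δ₁, δ₂, ε ∈ {1, −1}. If the set S^{δ₂,δ₁}_{n,ε} is nonempty, then |n| ∈ {1, 3}, and the minimum of |xy| over all (x, y) ∈ S^{δ₂,δ₁}_{n,ε} equals (|n| − 1)/2; that is, the minimum is 0 when |n| = 1 and 1 when |n| = 3. -/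
private lemma bnd (δ δ' ε w : ℤ) (h1 : δ = 1 ∨ δ = -1) (h2 : δ' = 1 ∨ δ' = -1)
    (h3 : ε = 1 ∨ ε = -1) : |δ * (δ' * w ^ 2 - ε)| ≤ w ^ 2 + 1 := by
  rw [abs_le]
  rcases h1 with rfl|rfl <;> rcases h2 with rfl|rfl <;> rcases h3 with rfl|rfl <;>
    constructor <;> nlinarith [sq_nonneg w]


private lemma key (a b : ℤ) (hab : a ^ 2 = b ^ 2 + 1) : b = 0 := by
  by_contra hb
  have h1 : 1 ≤ |b| := Int.one_le_abs hb
  have h2 : |b| < |a| := by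
    by_contra hle
    push_neg at hle
    have h4 : a ^ 2 ≤ b ^ 2 := by
      nlinarith [sq_abs a, sq_abs b, abs_nonneg a, abs_nonneg b]
    omega
  have h3 : |b| + 1 ≤ |a| := by omega
  nlinarith [sq_abs a, sq_abs b, abs_nonneg a, abs_nonneg b]

lemma lemA (n δ₂ δ₁ ε : ℤ)
    (hδ₁ : δ₁ = 1 ∨ δ₁ = -1) (hδ₂ : δ₂ = 1 ∨ δ₂ = -1) (hε : ε = 1 ∨ ε = -1)
    (hne : (Sset n δ₂ δ₁ ε).Nonempty) :
    ∃ p ∈ Sset n δ₂ δ₁ ε, (p.1 ^ 2 = 1 ∧ p.2 ^ 2 = 1) ∨ p.1 * p.2 = 0 := by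
  classical
  have hd1 : δ₁ ^ 2 = 1 := by rcases hδ₁ with h | h <;> simp [h]
  have hd2 : δ₂ ^ 2 = 1 := by rcases hδ₂ with h | h <;> simp [h]
  obtain ⟨p0, hp0⟩ := hne
  have hex : ∃ k : ℕ, ∃ q ∈ Sset n δ₂ δ₁ ε, q.1.natAbs + q.2.natAbs = k :=
    ⟨_, p0, hp0, rfl⟩
  obtain ⟨⟨x, y⟩, hq, hqk⟩ := Nat.find_spec hex
  have hmin : ∀ r ∈ Sset n δ₂ δ₁ ε,
      x.natAbs + y.natAbs ≤ r.1.natAbs + r.2.natAbs := by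
    intro r hr
    rw [hqk]
    exact Nat.find_min' hex ⟨r, hr, rfl⟩
  obtain ⟨heq, hgx, hgy⟩ := hq
  dsimp only at heq hgx hgy
  -- x-jump
  have hcx : IsCoprime x n := Int.isCoprime_iff_gcd_eq_one.mpr hgx
  have hcy : IsCoprime y n := Int.isCoprime_iff_gcd_eq_one.mpr hgy
  set x' : ℤ := -(x + δ₂ * n * y) with hx'def
  have heqx : δ₂ * x' ^ 2 + δ₁ * y ^ 2 + n * x' * y = ε := by
    rw [hx'def]; linear_combination heq + (2*n*x*y + δ₂*n^2*y^2) * hd2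
  have hgx' : Int.gcd x' n = 1 := by
    rw [Int.isCoprime_iff_gcd_eq_one.symm] at *
    have : IsCoprime (x + n * (δ₂ * y)) n := hcx.add_mul_left_left _
    have := this.neg_left
    have e : x' = -(x + n * (δ₂ * y)) := by rw [hx'def]; ring
    rw [e]; exact this
  have hmemx : (x', y) ∈ Sset n δ₂ δ₁ ε := ⟨heqx, hgx', hgy⟩
  have hprodx : x * x' = δ₂ * (δ₁ * y ^ 2 - ε) := by
    rw [hx'def]; linear_combination (-δ₂) * heq + x^2 * hd2
  have habx : |x| ≤ |x'| := by
    have h := hmin (x', y) hmemx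
    dsimp only at h
    rw [Int.abs_eq_natAbs, Int.abs_eq_natAbs]
    exact_mod_cast by omega
  have hboundx : |x * x'| ≤ y ^ 2 + 1 := by
    rw [hprodx]; exact bnd _ _ _ _ hδ₂ hδ₁ hε
  have hx2 : x ^ 2 ≤ y ^ 2 + 1 := by
    calc x ^ 2 = |x| * |x| := by rw [sq]; exact (abs_mul_abs_self _).symm
    _ ≤ |x| * |x'| := mul_le_mul_of_nonneg_left habx (abs_nonneg x)
    _ = |x * x'| := (abs_mul x x').symm
    _ ≤ y ^ 2 + 1 := hboundx
  -- y-jump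
  set y' : ℤ := -(y + δ₁ * n * x) with hy'def
  have heqy : δ₂ * x ^ 2 + δ₁ * y' ^ 2 + n * x * y' = ε := by
    rw [hy'def]; linear_combination heq + (2*n*x*y + δ₁*n^2*x^2) * hd1
  have hgy' : Int.gcd y' n = 1 := by
    rw [Int.isCoprime_iff_gcd_eq_one.symm] at *
    have : IsCoprime (y + n * (δ₁ * x)) n := hcy.add_mul_left_left _
    have := this.neg_left
    have e : y' = -(y + n * (δ₁ * x)) := by rw [hy'def]; ring
    rw [e]; exact this
  have hmemy : (x, y') ∈ Sset n δ₂ δ₁ ε := ⟨heqy, hgx, hgy'⟩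
  have hprody : y * y' = δ₁ * (δ₂ * x ^ 2 - ε) := by
    rw [hy'def]; linear_combination (-δ₁) * heq + y^2 * hd1
  have haby : |y| ≤ |y'| := by
    have h := hmin (x, y') hmemy
    dsimp only at h
    rw [Int.abs_eq_natAbs, Int.abs_eq_natAbs]
    exact_mod_cast by omega
  have hboundy : |y * y'| ≤ x ^ 2 + 1 := by
    rw [hprody]; exact bnd _ _ _ _ hδ₁ hδ₂ hε
  have hy2 : y ^ 2 ≤ x ^ 2 + 1 := by
    calc y ^ 2 = |y| * |y| := by rw [sq]; exact (abs_mul_abs_self _).symm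
    _ ≤ |y| * |y'| := mul_le_mul_of_nonneg_left haby (abs_nonneg y)
    _ = |y * y'| := (abs_mul y y').symm
    _ ≤ x ^ 2 + 1 := hboundy
  -- case analysis
  refine ⟨(x, y), ⟨heq, hgx, hgy⟩, ?_⟩
  dsimp only
  rcases eq_or_ne (x ^ 2) (y ^ 2) with hxy | hxy
  · -- x² = y² : show both = 1
    left
    have hx0 : x ≠ 0 := by
      rintro rfl
      have hy0 : y = 0 := by
        have hsq : y ^ 2 = 0 := by simpa using hxy.symm
        exact pow_eq_zero_iff (n := 2) (by norm_num) |>.mp hsq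
      subst hy0
      simp at heq
      rcases hε with h|h <;> omega
    have hcases : x = y ∨ x = -y := by
      have h : (x - y) * (x + y) = 0 := by linear_combination hxy
      rcases mul_eq_zero.mp h with h|h
      · left; linarith
      · right; linarith
    have hdvd : x ^ 2 ∣ ε := by
      rcases hcases with rfl | h
      · exact ⟨δ₂ + δ₁ + n, by linear_combination -heq⟩
      · subst h
        exact ⟨δ₂ + δ₁ - n, by linear_combination -heq⟩
    have h1 : (x ^ 2).natAbs ∣ ε.natAbs := Int.natAbs_dvd_natAbs.mpr hdvd
    have h2 : ε.natAbs = 1 := by rcases hε with h|h <;> simp [h]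
    rw [h2, Nat.dvd_one] at h1
    have hx1 : x ^ 2 = 1 := by
      have := sq_nonneg x
      omega
    exact ⟨hx1, by omega⟩
  · -- consecutive squares: one of x,y is 0
    right
    have hcon : x ^ 2 = y ^ 2 + 1 ∨ y ^ 2 = x ^ 2 + 1 := by omega
    rcases hcon with h | h
    · rw [key x y h]; ring
    · rw [key y x h]; ring

/-- if `S^{δ₂,δ₁}_{n,ε} ≠ ∅` then `|n| ∈ {1,3}` and the minimum of
`|xy|` over `(x,y) ∈ S^{δ₂,δ₁}_{n,ε}` equals `(|n| - 1)/2`. -/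
theorem stmt_3 (n δ₁ δ₂ ε : ℤ)
    (hδ₁ : δ₁ = 1 ∨ δ₁ = -1) (hδ₂ : δ₂ = 1 ∨ δ₂ = -1) (hε : ε = 1 ∨ ε = -1)
    (hne : (Sset n δ₂ δ₁ ε).Nonempty) :
    (|n| = 1 ∨ |n| = 3) ∧
      IsLeast {m : ℤ | ∃ p ∈ Sset n δ₂ δ₁ ε, m = |p.1 * p.2|} ((|n| - 1) / 2) := by
  obtain ⟨⟨x, y⟩, hmem, hprop⟩ := lemA n δ₂ δ₁ ε hδ₁ hδ₂ hε hne
  obtain ⟨heq, hgx, hgy⟩ := hmem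
  dsimp only at heq hgx hgy hprop
  have habs : |n| = 1 ∨ |n| = 3 := by
    rcases hprop with ⟨hx2, hy2⟩ | h0
    · have hxy : x * y = 1 ∨ x * y = -1 := by
        have h : (x*y - 1) * (x*y + 1) = 0 := by linear_combination y^2 * hx2 + hy2
        rcases mul_eq_zero.mp h with h|h
        · left; linarith
        · right; linarith
      have hn : n * (x * y) = ε - δ₂ - δ₁ := by
        linear_combination heq - δ₂ * hx2 - δ₁ * hy2
      rw [Int.abs_eq_natAbs]
      rcases hxy with h|h <;> rw [h] at hn <;>
        rcases hδ₁ with rfl|rfl <;> rcases hδ₂ with rfl|rfl <;> rcases hε with rfl|rfl <;>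
        · rw [show (1:ℤ) = ((1:ℕ):ℤ) by norm_num, show (3:ℤ) = ((3:ℕ):ℤ) by norm_num] at *
          omega
    · rcases mul_eq_zero.mp h0 with rfl | rfl
      · rw [Int.gcd_zero_left] at hgx
        left; rw [Int.abs_eq_natAbs]; omega
      · rw [Int.gcd_zero_left] at hgy
        left; rw [Int.abs_eq_natAbs]; omega
  refine ⟨habs, ?_⟩
  rcases habs with h1 | h3
  · -- |n| = 1
    have h0 : (|n| - 1) / 2 = 0 := by rw [h1]; norm_num
    rw [h0]
    have hn1 : n = 1 ∨ n = -1 := by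
      have := h1
      rw [Int.abs_eq_natAbs] at this
      omega
    have hde : δ₂ = ε ∨ δ₁ = ε := by
      by_contra hc
      push_neg at hc
      obtain ⟨hc2, hc1⟩ := hc
      have h2 : δ₂ = -ε := by rcases hδ₂ with rfl|rfl <;> rcases hε with rfl|rfl <;> omega
      have h1' : δ₁ = -ε := by rcases hδ₁ with rfl|rfl <;> rcases hε with rfl|rfl <;> omega
      rw [h2, h1'] at heq
      rcases hε with rfl|rfl <;> rcases hn1 with rfl|rfl <;>
        nlinarith [sq_nonneg (x - y), sq_nonneg (x + y), sq_nonneg x, sq_nonneg y]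
    constructor
    · -- membership : 0 is attained
      have hg0 : Int.gcd (0:ℤ) n = 1 := by
        rw [Int.gcd_zero_left]
        rw [Int.abs_eq_natAbs] at h1
        omega
      have hg1 : Int.gcd (1:ℤ) n = 1 := by simp [Int.gcd]
      rcases hde with rfl | rfl
      · exact ⟨(1, 0), ⟨by ring, hg1, hg0⟩, by simp⟩
      · exact ⟨(0, 1), ⟨by ring, hg0, hg1⟩, by simp⟩
    · rintro m ⟨p, -, rfl⟩
      exact abs_nonneg _
  · -- |n| = 3
    have h0 : (|n| - 1) / 2 = 1 := by rw [h3]; norm_num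
    rw [h0]
    obtain ⟨hx2, hy2⟩ : x ^ 2 = 1 ∧ y ^ 2 = 1 := by
      rcases hprop with h | h0'
      · exact h
      · exfalso
        rw [Int.abs_eq_natAbs] at h3
        rcases mul_eq_zero.mp h0' with rfl | rfl
        · rw [Int.gcd_zero_left] at hgx; omega
        · rw [Int.gcd_zero_left] at hgy; omega
    have hxy1 : |x * y| = 1 := by
      have h : (x*y - 1) * (x*y + 1) = 0 := by linear_combination y^2 * hx2 + hy2
      rcases mul_eq_zero.mp h with h|h
      · have : x*y = 1 := by linarith
        simp [this]
      · have : x*y = -1 := by linarith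
        simp [this]
    constructor
    · exact ⟨(x, y), ⟨heq, hgx, hgy⟩, hxy1.symm⟩
    · rintro m ⟨⟨a, b⟩, ⟨-, hga, hgb⟩, rfl⟩
      dsimp only
      rw [Int.abs_eq_natAbs] at h3
      have ha : a ≠ 0 := by rintro rfl; rw [Int.gcd_zero_left] at hga; omega
      have hb : b ≠ 0 := by rintro rfl; rw [Int.gcd_zero_left] at hgb; omega
      exact Int.one_le_abs (mul_ne_zero ha hb)
end

section
/- Let n ∈ ℤ and δ₁, δ₂, ε ∈ {1, −1}, and suppose (x, y) ∈ S^{δ₂,δ₁}_{n,ε}. Then there is a finite sequence of mutations, each step replacing a pair by one of its two mutations, which transforms (x, y) into a pair (x′, y′) ∈ S^{δ₂,δ₁}_{n,ε} such that |x′y′| equals the minimum of |ab| over all (a, b) ∈ S^{δ₂,δ₁}_{n,ε}. -/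
/-- One mutation step: replace `(x,y)` by `(-x - nδ₂y, y)` or by `(x, -y - nδ₁x)`. -/
def MutStep (n δ₂ δ₁ : ℤ) (p q : ℤ × ℤ) : Prop :=
  q = (-p.1 - n * δ₂ * p.2, p.2) ∨ q = (p.1, -p.2 - n * δ₁ * p.1)

/-- Vieta product identity for the first-coordinate mutation. -/
lemma prod_id (n δ₁ δ₂ ε x y : ℤ) (hδ₂ : δ₂ = 1 ∨ δ₂ = -1)
    (heq : δ₂ * x ^ 2 + δ₁ * y ^ 2 + n * x * y = ε) :
    x * (-x - n * δ₂ * y) = δ₂ * (δ₁ * y ^ 2 - ε) := by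
  rcases hδ₂ with rfl | rfl
  · linear_combination -heq
  · linear_combination heq

/-- Mutation preserves membership in the set. -/
lemma mut_mem (n δ₁ δ₂ ε : ℤ) (hδ₂ : δ₂ = 1 ∨ δ₂ = -1) (hδ₁ : δ₁ = 1 ∨ δ₁ = -1)
    {p q : ℤ × ℤ} (hstep : MutStep n δ₂ δ₁ p q) (hp : p ∈ Sset n δ₂ δ₁ ε) :
    q ∈ Sset n δ₂ δ₁ ε := by
  obtain ⟨heq, h1, h2⟩ := hp
  rcases hstep with rfl | rfl
  · refine ⟨?_, ?_, h2⟩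
    · show δ₂ * (-p.1 - n * δ₂ * p.2) ^ 2 + δ₁ * p.2 ^ 2
          + n * (-p.1 - n * δ₂ * p.2) * p.2 = ε
      rcases hδ₂ with rfl | rfl <;> linear_combination heq
    · show Int.gcd (-p.1 - n * δ₂ * p.2) n = 1
      have h1' : IsCoprime p.1 n := Int.isCoprime_iff_gcd_eq_one.mpr h1
      have h3 : IsCoprime (-p.1 + n * (-δ₂ * p.2)) n :=
        (h1'.neg_left).add_mul_left_left _
      rw [show (-p.1 - n * δ₂ * p.2) = -p.1 + n * (-δ₂ * p.2) by ring]
      exact Int.isCoprime_iff_gcd_eq_one.mp h3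
  · refine ⟨?_, h1, ?_⟩
    · show δ₂ * p.1 ^ 2 + δ₁ * (-p.2 - n * δ₁ * p.1) ^ 2
          + n * p.1 * (-p.2 - n * δ₁ * p.1) = ε
      rcases hδ₁ with rfl | rfl <;> linear_combination heq
    · show Int.gcd (-p.2 - n * δ₁ * p.1) n = 1
      have h2' : IsCoprime p.2 n := Int.isCoprime_iff_gcd_eq_one.mpr h2
      have h3 : IsCoprime (-p.2 + n * (-δ₁ * p.1)) n :=
        (h2'.neg_left).add_mul_left_left _
      rw [show (-p.2 - n * δ₁ * p.1) = -p.2 + n * (-δ₁ * p.1) by ring]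
      exact Int.isCoprime_iff_gcd_eq_one.mp h3

/-- If `|x| > |y| ≥ 1` then the first mutation satisfies `|x̂| ≤ |y|`. -/
lemma hat_small (n δ₁ δ₂ ε x y : ℤ) (hδ₁ : δ₁ = 1 ∨ δ₁ = -1)
    (hδ₂ : δ₂ = 1 ∨ δ₂ = -1) (hε : ε = 1 ∨ ε = -1)
    (heq : δ₂ * x ^ 2 + δ₁ * y ^ 2 + n * x * y = ε)
    (hy : y ≠ 0) (hgt : |y| < |x|) :
    |(-x - n * δ₂ * y)| ≤ |y| := by
  have hp := prod_id n δ₁ δ₂ ε x y hδ₂ heq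
  have hb : |δ₁ * y ^ 2 - ε| ≤ y ^ 2 + 1 := by
    rcases hδ₁ with rfl | rfl <;> rcases hε with rfl | rfl <;>
      (rw [abs_le]; constructor <;> nlinarith [sq_nonneg y])
  have habs : |x| * |(-x - n * δ₂ * y)| = |δ₂ * (δ₁ * y ^ 2 - ε)| := by
    rw [← abs_mul, hp]
  have hd2 : |δ₂| = 1 := by rcases hδ₂ with rfl | rfl <;> norm_num
  rw [abs_mul, hd2, one_mul] at habs
  have hy1 : 1 ≤ |y| := by
    rcases abs_pos.mpr hy with h; omega
  have hkey : |x| * |(-x - n * δ₂ * y)| ≤ |y| * |x| := by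
    rw [habs]
    have : y ^ 2 + 1 ≤ |y| * |x| := by
      nlinarith [sq_abs y]
    linarith
  have hx0 : 0 < |x| := by omega
  nlinarith [abs_nonneg (-x - n * δ₂ * y)]

/-- Descent: if `(x,y) ∈ S` is not of minimal `|xy|`, some mutation strictly
decreases `|xy|`. -/
lemma descent (n δ₁ δ₂ ε x y : ℤ)
    (hδ₁ : δ₁ = 1 ∨ δ₁ = -1) (hδ₂ : δ₂ = 1 ∨ δ₂ = -1) (hε : ε = 1 ∨ ε = -1)
    (hxy : (x, y) ∈ Sset n δ₂ δ₁ ε) (q : ℤ × ℤ) (hq : q ∈ Sset n δ₂ δ₁ ε)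
    (hlt : |q.1 * q.2| < |x * y|) :
    ∃ p'' : ℤ × ℤ, MutStep n δ₂ δ₁ (x, y) p'' ∧
      p''.1.natAbs * p''.2.natAbs < x.natAbs * y.natAbs := by
  obtain ⟨heq, hg1, hg2⟩ := hxy
  simp only at heq hg1 hg2
  have hx0 : x ≠ 0 := by
    rintro rfl
    rw [zero_mul, abs_zero] at hlt
    exact absurd hlt (abs_nonneg _).not_gt
  have hy0 : y ≠ 0 := by
    rintro rfl
    rw [mul_zero, abs_zero] at hlt
    exact absurd hlt (abs_nonneg _).not_gt
  have heq' : δ₁ * y ^ 2 + δ₂ * x ^ 2 + n * y * x = ε := by linear_combination heq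
  rcases lt_trichotomy (|y|) (|x|) with hc | hc | hc
  · -- |x| > |y| : mutate x
    refine ⟨(-x - n * δ₂ * y, y), Or.inl rfl, ?_⟩
    have h := hat_small n δ₁ δ₂ ε x y hδ₁ hδ₂ hε heq hy0 hc
    have h1 : (-x - n * δ₂ * y).natAbs ≤ y.natAbs := by
      rw [Int.abs_eq_natAbs, Int.abs_eq_natAbs] at h; exact_mod_cast h
    have h2 : y.natAbs < x.natAbs := by
      rw [Int.abs_eq_natAbs, Int.abs_eq_natAbs] at hc; exact_mod_cast hc
    calc (-x - n * δ₂ * y).natAbs * y.natAbs ≤ y.natAbs * y.natAbs :=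
          Nat.mul_le_mul_right _ h1
      _ < x.natAbs * y.natAbs := by
          have : 0 < y.natAbs := Int.natAbs_pos.mpr hy0
          exact (Nat.mul_lt_mul_right this).mpr h2
  · -- |x| = |y| : then x² = y² = 1
    have hxy2 : x = y ∨ x = -y := by
      have : y.natAbs = x.natAbs := by
        rw [Int.abs_eq_natAbs, Int.abs_eq_natAbs] at hc; exact_mod_cast hc
      omega
    have hx2 : x ^ 2 = 1 := by
      have hdvd : x ^ 2 ∣ ε := by
        rcases hxy2 with rfl | rfl
        · exact ⟨δ₂ + δ₁ + n, by linear_combination -heq⟩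
        · exact ⟨δ₂ + δ₁ - n, by linear_combination -heq⟩
      have hunit : IsUnit (x ^ 2) :=
        isUnit_of_dvd_unit hdvd (by rcases hε with rfl | rfl <;> norm_num)
      rcases Int.isUnit_iff.mp hunit with h | h
      · exact h
      · nlinarith [sq_nonneg x]
    have hy2 : y ^ 2 = 1 := by rcases hxy2 with rfl | rfl <;> nlinarith
    have hx1 : x = 1 ∨ x = -1 := by
      have h0 : (x - 1) * (x + 1) = 0 := by linear_combination hx2
      rcases mul_eq_zero.mp h0 with h | h
      · left; omega
      · right; omega
    have hy1 : y = 1 ∨ y = -1 := by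
      have h0 : (y - 1) * (y + 1) = 0 := by linear_combination hy2
      rcases mul_eq_zero.mp h0 with h | h
      · left; omega
      · right; omega
    have hpos : 0 < x.natAbs * y.natAbs :=
      Nat.mul_pos (Int.natAbs_pos.mpr hx0) (Int.natAbs_pos.mpr hy0)
    -- |xy| = 1, so |q1 q2| = 0, so n = ±1
    have hxyabs : |x * y| = 1 := by
      rcases hx1 with rfl | rfl <;> rcases hy1 with rfl | rfl <;> norm_num
    have hq0 : q.1 = 0 ∨ q.2 = 0 := by
      rw [hxyabs] at hlt
      exact mul_eq_zero.mp (Int.abs_lt_one_iff.mp hlt)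
    have hn : n = 1 ∨ n = -1 := by
      obtain ⟨_, hqg1, hqg2⟩ := hq
      rcases hq0 with h | h
      · rw [h, Int.gcd_zero_left] at hqg1; omega
      · rw [h, Int.gcd_zero_left] at hqg2; omega
    by_cases h1ε : δ₁ = ε
    · refine ⟨(-x - n * δ₂ * y, y), Or.inl rfl, ?_⟩
      have hp := prod_id n δ₁ δ₂ ε x y hδ₂ heq
      rw [h1ε, hy2] at hp
      have hhat : -x - n * δ₂ * y = 0 := by
        have : x * (-x - n * δ₂ * y) = 0 := by rw [hp]; ring
        rcases mul_eq_zero.mp this with h | h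
        · exact absurd h hx0
        · exact h
      simpa [hhat] using hpos
    · by_cases h2ε : δ₂ = ε
      · refine ⟨(x, -y - n * δ₁ * x), Or.inr rfl, ?_⟩
        have hp := prod_id n δ₂ δ₁ ε y x hδ₁ heq'
        rw [h2ε, hx2] at hp
        have hhat : -y - n * δ₁ * x = 0 := by
          have : y * (-y - n * δ₁ * x) = 0 := by rw [hp]; ring
          rcases mul_eq_zero.mp this with h | h
          · exact absurd h hy0
          · exact h
        simpa [hhat] using hpos
      · -- δ₁ = δ₂ = -ε : contradiction with the equation
        exfalso
        have hd1 : δ₁ = -ε := by rcases hδ₁ with rfl | rfl <;> rcases hε with rfl | rfl <;> omega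
        have hd2 : δ₂ = -ε := by rcases hδ₂ with rfl | rfl <;> rcases hε with rfl | rfl <;> omega
        subst hd1; subst hd2
        have h3 : n * x * y = 3 * ε := by linear_combination heq + ε * hx2 + ε * hy2
        rcases hn with rfl | rfl <;> rcases hx1 with rfl | rfl <;>
          rcases hy1 with rfl | rfl <;> rcases hε with rfl | rfl <;> norm_num at h3
  · -- |y| > |x| : mutate y
    refine ⟨(x, -y - n * δ₁ * x), Or.inr rfl, ?_⟩
    have h := hat_small n δ₂ δ₁ ε y x hδ₂ hδ₁ hε heq' hx0 hc
    have h1 : (-y - n * δ₁ * x).natAbs ≤ x.natAbs := by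
      rw [Int.abs_eq_natAbs, Int.abs_eq_natAbs] at h; exact_mod_cast h
    have h2 : x.natAbs < y.natAbs := by
      rw [Int.abs_eq_natAbs, Int.abs_eq_natAbs] at hc; exact_mod_cast hc
    calc x.natAbs * (-y - n * δ₁ * x).natAbs ≤ x.natAbs * x.natAbs :=
          Nat.mul_le_mul_left _ h1
      _ < x.natAbs * y.natAbs := by
          have : 0 < x.natAbs := Int.natAbs_pos.mpr hx0
          exact (Nat.mul_lt_mul_left this).mpr h2

/-- a finite sequence of mutations transforms any `(x,y) ∈ S^{δ₂,δ₁}_{n,ε}`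
into a pair of `S^{δ₂,δ₁}_{n,ε}` realizing the minimum of `|ab|` over the set. -/
theorem stmt_4 (n δ₁ δ₂ ε x y : ℤ)
    (hδ₁ : δ₁ = 1 ∨ δ₁ = -1) (hδ₂ : δ₂ = 1 ∨ δ₂ = -1) (hε : ε = 1 ∨ ε = -1)
    (hxy : (x, y) ∈ Sset n δ₂ δ₁ ε) :
    ∃ p' : ℤ × ℤ, Relation.ReflTransGen (MutStep n δ₂ δ₁) (x, y) p' ∧
      p' ∈ Sset n δ₂ δ₁ ε ∧
      ∀ q ∈ Sset n δ₂ δ₁ ε, |p'.1 * p'.2| ≤ |q.1 * q.2| := by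
  suffices H : ∀ m : ℕ, ∀ p : ℤ × ℤ, p.1.natAbs * p.2.natAbs = m →
      p ∈ Sset n δ₂ δ₁ ε →
      ∃ p' : ℤ × ℤ, Relation.ReflTransGen (MutStep n δ₂ δ₁) p p' ∧
        p' ∈ Sset n δ₂ δ₁ ε ∧
        ∀ q ∈ Sset n δ₂ δ₁ ε, |p'.1 * p'.2| ≤ |q.1 * q.2| by
    exact H _ (x, y) rfl hxy
  intro m
  induction m using Nat.strong_induction_on with
  | _ m ih =>
    intro p hm hp
    by_cases hmin : ∀ q ∈ Sset n δ₂ δ₁ ε, |p.1 * p.2| ≤ |q.1 * q.2|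
    · exact ⟨p, Relation.ReflTransGen.refl, hp, hmin⟩
    · push_neg at hmin
      obtain ⟨q, hq, hlt⟩ := hmin
      obtain ⟨p'', hstep, hless⟩ :=
        descent n δ₁ δ₂ ε p.1 p.2 hδ₁ hδ₂ hε (by simpa using hp) q hq hlt
      rw [hm] at hless
      have hstep' : MutStep n δ₂ δ₁ p p'' := by simpa using hstep
      have hp'' := mut_mem n δ₁ δ₂ ε hδ₂ hδ₁ hstep' hp
      obtain ⟨p', h1, h2, h3⟩ := ih _ hless p'' rfl hp''
      exact ⟨p', Relation.ReflTransGen.head hstep' h1, h2, h3⟩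
end

section
/- Let n ∈ ℤ and δ₁, δ₂, ε ∈ {1, −1}, and suppose x, y ∈ ℤ satisfy δ₂x² + δ₁y² + nxy = ε with |x| > |y| ≥ 1. Then the mutated first coordinate x̂ = −x − nδ₂y satisfies |x̂| < |x|. Symmetrically, if |y| > |x| ≥ 1, then ŷ = −y − nδ₁x satisfies |ŷ| < |y|. -/
lemma stmt_6_aux (n δa δb ε x y : ℤ)
    (hδa : δa = 1 ∨ δa = -1) (hδb : δb = 1 ∨ δb = -1) (hε : ε = 1 ∨ ε = -1)
    (heq : δb * x ^ 2 + δa * y ^ 2 + n * x * y = ε)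
    (h1 : |x| > |y|) (h2 : |y| ≥ 1) : |(-x - n * δb * y)| < |x| := by
  have hprod : x * (-x - n * δb * y) = δb * δa * y ^ 2 - δb * ε := by
    rcases hδb with rfl | rfl
    · linear_combination -heq
    · linear_combination heq
  have hbound : |δb * δa * y ^ 2 - δb * ε| ≤ y ^ 2 + 1 := by
    have h0 : (0:ℤ) ≤ y ^ 2 := sq_nonneg y
    rcases hδa with rfl | rfl <;> rcases hδb with rfl | rfl <;>
      rcases hε with rfl | rfl <;>
      simp [abs_le] <;> omega
  have habs : |x| * |(-x - n * δb * y)| ≤ y ^ 2 + 1 := by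
    rw [← abs_mul, hprod]; exact hbound
  have hx2 : y ^ 2 + 1 < |x| * |x| := by
    nlinarith [sq_abs y, abs_nonneg y]
  have hxpos : 0 < |x| := lt_of_le_of_lt (abs_nonneg y) h1
  have := lt_of_le_of_lt habs hx2
  exact lt_of_mul_lt_mul_left this (le_of_lt hxpos)

/-- for solutions of `δ₂x² + δ₁y² + nxy = ε` with `δ₁, δ₂, ε ∈ {1,-1}`,
if `|x| > |y| ≥ 1` then the mutation `x̂ = -x - nδ₂y` satisfies `|x̂| < |x|`;
symmetrically, if `|y| > |x| ≥ 1` then `ŷ = -y - nδ₁x` satisfies `|ŷ| < |y|`. -/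
theorem stmt_6 (n δ₁ δ₂ ε x y : ℤ)
    (hδ₁ : δ₁ = 1 ∨ δ₁ = -1) (hδ₂ : δ₂ = 1 ∨ δ₂ = -1) (hε : ε = 1 ∨ ε = -1)
    (heq : δ₂ * x ^ 2 + δ₁ * y ^ 2 + n * x * y = ε) :
    (|x| > |y| → |y| ≥ 1 → |(-x - n * δ₂ * y)| < |x|) ∧
      (|y| > |x| → |x| ≥ 1 → |(-y - n * δ₁ * x)| < |y|) := by
  constructor
  · exact fun h1 h2 => stmt_6_aux n δ₁ δ₂ ε x y hδ₁ hδ₂ hε heq h1 h2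
  · refine fun h1 h2 => stmt_6_aux n δ₂ δ₁ ε y x hδ₂ hδ₁ hε ?_ h1 h2
    linear_combination heq
end

section
/- Let δ₁, δ₂ ∈ {1, −1}. If there exist integers x, y with δ₂x² + δ₁y² + 3xy = −1 and gcd(x, 3) = gcd(y, 3) = 1, then δ₁ = δ₂ = 1. Moreover, the integer solutions (x, y) of x² + y² + 3xy = −1 with gcd(x, 3) = gcd(y, 3) = 1 and |xy| = 1 are exactly (1, −1) and (−1, 1). -/
lemma sq_zmod3 : ∀ a : ZMod 3, a ≠ 0 → a ^ 2 = 1 := by decide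

lemma ne_zero_zmod3 (x : ℤ) (hx : Int.gcd x 3 = 1) : (x : ZMod 3) ≠ 0 := by
  rw [Ne, ZMod.intCast_zmod_eq_zero_iff_dvd]
  intro h
  have : (3:ℤ) ∣ (Int.gcd x 3 : ℤ) := Int.dvd_coe_gcd h (dvd_refl 3)
  rw [hx] at this
  norm_num at this

/-- if `δ₂x² + δ₁y² + 3xy = -1` has an integer solution with
`gcd(x,3) = gcd(y,3) = 1`, then `δ₁ = δ₂ = 1`; moreover the solutions of
`x² + y² + 3xy = -1` with `gcd(x,3) = gcd(y,3) = 1` and `|xy| = 1` are exactly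
`(1,-1)` and `(-1,1)`. -/
theorem stmt_7 (δ₁ δ₂ : ℤ) (hδ₁ : δ₁ = 1 ∨ δ₁ = -1) (hδ₂ : δ₂ = 1 ∨ δ₂ = -1) :
    ((∃ x y : ℤ, δ₂ * x ^ 2 + δ₁ * y ^ 2 + 3 * x * y = -1 ∧
        Int.gcd x 3 = 1 ∧ Int.gcd y 3 = 1) → δ₁ = 1 ∧ δ₂ = 1) ∧
      {p : ℤ × ℤ | p.1 ^ 2 + p.2 ^ 2 + 3 * p.1 * p.2 = -1 ∧
          Int.gcd p.1 3 = 1 ∧ Int.gcd p.2 3 = 1 ∧ |p.1 * p.2| = 1} =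
        {(1, -1), (-1, 1)} := by
  constructor
  · rintro ⟨x, y, heq, hx, hy⟩
    have h3 := congrArg (fun z : ℤ => (z : ZMod 3)) heq
    push_cast at h3
    rw [sq_zmod3 _ (ne_zero_zmod3 x hx), sq_zmod3 _ (ne_zero_zmod3 y hy)] at h3
    have h0 : (3 : ZMod 3) * (x : ZMod 3) * (y : ZMod 3) = 0 := by
      rw [show (3 : ZMod 3) = 0 from rfl]; ring
    rw [h0] at h3
    rcases hδ₁ with h1 | h1 <;> rcases hδ₂ with h2 | h2 <;>
      subst h1 <;> subst h2 <;> push_cast at h3 <;> simp_all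
  · ext ⟨x, y⟩
    simp only [Set.mem_setOf_eq, Set.mem_insert_iff, Set.mem_singleton_iff, Prod.mk.injEq]
    constructor
    · rintro ⟨heq, hx, hy, habs⟩
      rw [abs_mul] at habs
      have hxa := Int.eq_one_of_mul_eq_one_right (abs_nonneg x) habs
      have hya := Int.eq_one_of_mul_eq_one_left (abs_nonneg y) habs
      rcases abs_eq (by norm_num : (0:ℤ) ≤ 1) |>.mp hxa with hx1 | hx1 <;>
        rcases abs_eq (by norm_num : (0:ℤ) ≤ 1) |>.mp hya with hy1 | hy1 <;>
          subst hx1 <;> subst hy1 <;> revert heq <;> norm_num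
    · rintro (⟨hx1, hy1⟩ | ⟨hx1, hy1⟩) <;> subst hx1 <;> subst hy1 <;>
        refine ⟨by norm_num, by decide, by decide, by norm_num⟩
end

section
/- The set of pairs (x, y) ∈ ℤ² satisfying x² + y² + 3xy = −1 and gcd(x, 3) = gcd(y, 3) = 1 is exactly { ±(−F_{2k−1}, F_{2k+1}) : k ≥ 0 } ∪ { ±(F_{2k+1}, −F_{2k−1}) : k ≥ 0 }. -/
/-- Auxiliary sequence: `stmt12f k = F (2k-1)`. -/
def stmt12f : ℕ → ℤ
  | 0 => 1
  | 1 => 1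
  | (n+2) => 3 * stmt12f (n+1) - stmt12f n

lemma stmt12f_zero : stmt12f 0 = 1 := rfl
lemma stmt12f_one : stmt12f 1 = 1 := rfl
lemma stmt12f_rec (n : ℕ) : stmt12f (n+2) = 3 * stmt12f (n+1) - stmt12f n := rfl

lemma stmt12_inv (k : ℕ) :
    (stmt12f k)^2 + (stmt12f (k+1))^2 - 3 * stmt12f k * stmt12f (k+1) = -1 := by
  induction k with
  | zero => simp [stmt12f_zero, stmt12f_one]
  | succ n ih => rw [stmt12f_rec]; linear_combination ih

lemma stmt12_gcd3 (x y : ℤ) (h : x^2 + y^2 + 3*x*y = -1) :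
    Int.gcd x 3 = 1 ∧ Int.gcd y 3 = 1 := by
  have hz : ((x : ZMod 3))^2 + (y : ZMod 3)^2 + 3*(x:ZMod 3)*(y:ZMod 3) = -1 := by
    exact_mod_cast congrArg (Int.cast : ℤ → ZMod 3) h
  have key : ∀ a b : ZMod 3, a^2 + b^2 + 3*a*b = -1 → a ≠ 0 ∧ b ≠ 0 := by decide
  obtain ⟨hx, hy⟩ := key _ _ hz
  simp only [ne_eq, ZMod.intCast_zmod_eq_zero_iff_dvd] at hx hy
  constructor
  · have : ¬ (3 ∣ x.natAbs) := by rwa [← Int.natAbs_dvd_natAbs] at hx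
    exact Nat.Coprime.gcd_eq_one (Nat.coprime_comm.mp (Nat.prime_three.coprime_iff_not_dvd.mpr this))
  · have : ¬ (3 ∣ y.natAbs) := by rwa [← Int.natAbs_dvd_natAbs] at hy
    exact Nat.Coprime.gcd_eq_one (Nat.coprime_comm.mp (Nat.prime_three.coprime_iff_not_dvd.mpr this))

lemma stmt12_descent : ∀ n : ℕ, ∀ a b : ℤ, 0 < a → 0 < b → a ≤ b → b ≤ (n : ℤ) →
    a^2 + b^2 - 3*a*b = -1 → ∃ k, a = stmt12f k ∧ b = stmt12f (k+1) := by
  intro n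
  induction n with
  | zero => intro a b ha hb _ hbn _; omega
  | succ n ih =>
    intro a b ha hb hab hbn heq
    rcases eq_or_lt_of_le hab with he | hl
    · have hb1 : b = 1 := by nlinarith
      refine ⟨0, ?_, ?_⟩
      · rw [stmt12f_zero]; omega
      · rw [stmt12f_one]; omega
    · have hmul : (3*a - b) * b = a^2 + 1 := by linear_combination -heq
      have hpos : 0 < 3*a - b := by nlinarith [sq_nonneg a]
      have hle : 3*a - b ≤ a := by
        by_contra hcon
        push_neg at hcon
        have h2 : (a+1)*(a+1) ≤ (3*a-b)*b :=
          mul_le_mul (by linarith) (by linarith) (by linarith) (by linarith)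
        nlinarith
      have heq' : (3*a-b)^2 + a^2 - 3*(3*a-b)*a = -1 := by linear_combination heq
      obtain ⟨k, hk1, hk2⟩ := ih (3*a-b) a hpos ha hle (by omega) heq'
      refine ⟨k+1, hk2, ?_⟩
      rw [stmt12f_rec]
      omega

lemma stmt12_core (x y : ℤ) (hx : x < 0) (hy : 0 < y) (h : x^2 + y^2 + 3*x*y = -1) :
    ∃ k, (x = -stmt12f k ∧ y = stmt12f (k+1)) ∨ (x = -stmt12f (k+1) ∧ y = stmt12f k) := by
  rcases le_total (-x) y with hab | hab
  · obtain ⟨k, h1, h2⟩ := stmt12_descent y.toNat (-x) y (by omega) hy hab (by omega)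
      (by linear_combination h)
    exact ⟨k, Or.inl ⟨by omega, h2⟩⟩
  · obtain ⟨k, h1, h2⟩ := stmt12_descent (-x).toNat y (-x) hy (by omega) hab (by omega)
      (by linear_combination h)
    exact ⟨k, Or.inr ⟨by omega, h1⟩⟩

/-- the pairs `(x,y) ∈ ℤ²` with `x² + y² + 3xy = -1` and
`gcd(x,3) = gcd(y,3) = 1` are exactly `±(-F_{2k-1}, F_{2k+1})` and
`±(F_{2k+1}, -F_{2k-1})` for `k ≥ 0`, where `F` is the Fibonacci sequence
extended to all integer indices. -/
theorem stmt_12 (F : ℤ → ℤ) (hFneg1 : F (-1) = 1) (hF₀ : F 0 = 0)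
    (hFrec : ∀ m : ℤ, F (m + 1) = F m + F (m - 1)) :
    {p : ℤ × ℤ | p.1 ^ 2 + p.2 ^ 2 + 3 * p.1 * p.2 = -1 ∧
        Int.gcd p.1 3 = 1 ∧ Int.gcd p.2 3 = 1} =
      {p : ℤ × ℤ | ∃ k : ℕ,
        p = (-F (2 * k - 1), F (2 * k + 1)) ∨ p = -(-F (2 * k - 1), F (2 * k + 1)) ∨
        p = (F (2 * k + 1), -F (2 * k - 1)) ∨ p = -(F (2 * k + 1), -F (2 * k - 1))} := by
  -- jump-two recurrence
  have hFrec' : ∀ m : ℤ, F m = F (m-1) + F (m-2) := by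
    intro m
    have := hFrec (m-1)
    rw [show m-1+1 = m by ring, show m-1-1 = m-2 by ring] at this
    exact this
  have hF2 : ∀ m : ℤ, F (m+2) = 3 * F m - F (m-2) := by
    intro m
    have h1 := hFrec (m+1)
    rw [show m+1+1 = m+2 by ring, show m+1-1 = m by ring] at h1
    have h2 := hFrec m
    have h3 := hFrec' m
    linarith
  -- F(2k-1) = stmt12f k
  have g : ∀ k : ℕ, F (2*(k:ℤ) - 1) = stmt12f k ∧ F (2*(k:ℤ) + 1) = stmt12f (k+1) := by
    intro k
    induction k with
    | zero =>
      constructor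
      · norm_num [hFneg1, stmt12f_zero]
      · have := hFrec 0
        norm_num [hFneg1, hF₀] at this ⊢
        rw [this, stmt12f_one]
    | succ n ih =>
      obtain ⟨ih1, ih2⟩ := ih
      have e1 : (2*((n:ℤ)+1) - 1) = 2*(n:ℤ) + 1 := by ring
      constructor
      · rw [show ((n+1:ℕ):ℤ) = (n:ℤ)+1 by push_cast; ring, e1]; exact ih2
      · have := hF2 (2*(n:ℤ)+1)
        rw [show 2*(n:ℤ)+1+2 = 2*((n:ℤ)+1)+1 by ring, show 2*(n:ℤ)+1-2 = 2*(n:ℤ)-1 by ring] at this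
        rw [show ((n+1:ℕ):ℤ) = (n:ℤ)+1 by push_cast; ring, this, ih1, ih2, stmt12f_rec]
  ext ⟨x, y⟩
  simp only [Set.mem_setOf_eq]
  constructor
  · rintro ⟨heq, -, -⟩
    have hxyneg : x * y < 0 := by nlinarith [sq_nonneg (x+y)]
    rcases lt_trichotomy x 0 with hx | hx | hx
    · have hy : 0 < y := by nlinarith
      obtain ⟨k, ⟨h1, h2⟩ | ⟨h1, h2⟩⟩ := stmt12_core x y hx hy heq
      · exact ⟨k, Or.inl (by rw [(g k).1, (g k).2, h1, h2])⟩
      · refine ⟨k, Or.inr (Or.inr (Or.inr ?_))⟩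
        rw [(g k).1, (g k).2, Prod.neg_mk, neg_neg, h1, h2]
    · exfalso; subst hx; nlinarith [sq_nonneg y]
    · have hy : y < 0 := by nlinarith
      obtain ⟨k, ⟨h1, h2⟩ | ⟨h1, h2⟩⟩ := stmt12_core (-x) (-y) (by omega) (by omega)
        (by linear_combination heq)
      · refine ⟨k, Or.inr (Or.inl ?_)⟩
        rw [(g k).1, (g k).2, Prod.neg_mk, neg_neg]
        simp only [Prod.mk.injEq]
        omega
      · refine ⟨k, Or.inr (Or.inr (Or.inl ?_))⟩
        rw [(g k).1, (g k).2]
        simp only [Prod.mk.injEq]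
        omega
  · rintro ⟨k, h⟩
    have e1 := (g k).1
    have e2 := (g k).2
    have inv := stmt12_inv k
    rcases h with h | h | h | h <;>
      simp only [Prod.neg_mk, neg_neg, Prod.mk.injEq] at h <;>
      obtain ⟨h1, h2⟩ := h
    all_goals
      have heqn : x ^ 2 + y ^ 2 + 3*x*y = -1 := by
        rw [h1, h2, e1, e2]; linear_combination inv
      exact ⟨heqn, (stmt12_gcd3 x y heqn).1, (stmt12_gcd3 x y heqn).2⟩
end

section
/- The set of pairs (x, y) ∈ ℤ² satisfying −x² + y² + xy = −1 is exactly { ±(F_{2k+1}, F_{2k}) : k ≥ 0 } ∪ { ±(F_{2k+1}, −F_{2k+2}) : k ≥ 0 }. -/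
section Aux

variable (F : ℤ → ℤ) (hFneg1 : F (-1) = 1) (hF0 : F 0 = 0)
    (hFrec : ∀ m : ℤ, F (m + 1) = F m + F (m - 1))

include hFneg1 hF0 hFrec

lemma aux_F1 : F 1 = 1 := by
  have h := hFrec 0
  norm_num at h
  rw [h, hF0, hFneg1]
  norm_num

lemma aux_step (m : ℕ) : F ((m : ℤ) + 2) = F ((m : ℤ) + 1) + F (m : ℤ) := by
  have h := hFrec ((m : ℤ) + 1)
  have e1 : ((m : ℤ) + 1 + 1) = (m : ℤ) + 2 := by ring
  have e2 : ((m : ℤ) + 1 - 1) = (m : ℤ) := by ring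
  rw [e1, e2] at h
  exact h

lemma aux_ident (m : ℕ) :
    (F ((m : ℤ) + 1)) ^ 2 - F ((m : ℤ) + 1) * F (m : ℤ) - (F (m : ℤ)) ^ 2 = (-1 : ℤ) ^ m := by
  induction m with
  | zero =>
    simp [hF0, aux_F1 F hFneg1 hF0 hFrec]
  | succ m ih =>
    have hs := aux_step F hFneg1 hF0 hFrec m
    push_cast
    have e : ((m : ℤ) + 1 + 1) = (m : ℤ) + 2 := by ring
    rw [e, hs, pow_succ]
    linear_combination -ih

lemma aux_key : ∀ n : ℕ, ∀ x y : ℤ, x + y = n → 0 < x → 0 ≤ y →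
    (x ^ 2 - x * y - y ^ 2 = 1 ∨ x ^ 2 - x * y - y ^ 2 = -1) →
    ∃ m : ℕ, x = F ((m : ℤ) + 1) ∧ y = F (m : ℤ) := by
  intro n
  induction n using Nat.strong_induction_on with
  | _ n ih =>
  intro x y hsum hx hy hf
  rcases eq_or_lt_of_le hy with h0 | hypos
  · -- y = 0
    have hx1 : x = 1 := by rcases hf with hf | hf <;> nlinarith
    refine ⟨0, ?_, ?_⟩
    · rw [hx1]; norm_num [aux_F1 F hFneg1 hF0 hFrec]
    · rw [← h0]; norm_num [hF0]
  · -- y > 0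
    have hxy : y ≤ x := by
      rcases hf with hf | hf
      · nlinarith
      · by_contra h
        push_neg at h
        nlinarith
    obtain ⟨a, ha⟩ := Int.eq_ofNat_of_zero_le hx.le
    have han : a < n := by
      have : (a : ℤ) < n := by omega
      exact_mod_cast this
    have hf' : y ^ 2 - y * (x - y) - (x - y) ^ 2 = 1 ∨
        y ^ 2 - y * (x - y) - (x - y) ^ 2 = -1 := by
      rcases hf with hf | hf
      · right; nlinarith
      · left; nlinarith
    obtain ⟨m, hm1, hm2⟩ := ih a han y (x - y) (by omega) hypos (by omega) hf'
    refine ⟨m + 1, ?_, ?_⟩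
    · have hs := aux_step F hFneg1 hF0 hFrec m
      push_cast
      have e : ((m : ℤ) + 1 + 1) = (m : ℤ) + 2 := by ring
      rw [e, hs, ← hm1, ← hm2]
      ring
    · push_cast
      rw [← hm1]

lemma aux_even (m : ℕ) (x y : ℤ) (hx : x = F ((m : ℤ) + 1)) (hy : y = F (m : ℤ))
    (hf : x ^ 2 - x * y - y ^ 2 = 1) : ∃ k : ℕ, m = 2 * k := by
  have hid := aux_ident F hFneg1 hF0 hFrec m
  rw [← hx, ← hy, hf] at hid
  rcases Nat.even_or_odd m with he | ho
  · obtain ⟨j, hj⟩ := he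
    exact ⟨j, by omega⟩
  · rw [ho.neg_one_pow] at hid; norm_num at hid

lemma aux_pos (x y : ℤ) (hx : 0 < x) (hf : x ^ 2 - x * y - y ^ 2 = 1) :
    ∃ k : ℕ, (x = F (2 * (k : ℤ) + 1) ∧ y = F (2 * (k : ℤ))) ∨
      (x = F (2 * (k : ℤ) + 1) ∧ y = -F (2 * (k : ℤ) + 2)) := by
  rcases le_or_gt 0 y with hy | hy
  · obtain ⟨b, hb⟩ := Int.eq_ofNat_of_zero_le (by omega : (0:ℤ) ≤ x + y)
    obtain ⟨m, hm1, hm2⟩ := aux_key F hFneg1 hF0 hFrec b x y hb hx hy (Or.inl hf)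
    obtain ⟨k, rfl⟩ := aux_even F hFneg1 hF0 hFrec m x y hm1 hm2 hf
    exact ⟨k, Or.inl ⟨by rw [hm1]; push_cast; ring_nf, by rw [hm2]; push_cast; ring_nf⟩⟩
  · -- y < 0 : use (x, -x-y)
    have hxy : x + y ≤ 0 := by nlinarith
    set y' : ℤ := -x - y with hy'
    have hy'0 : 0 ≤ y' := by omega
    have hf' : x ^ 2 - x * y' - y' ^ 2 = 1 := by rw [hy']; nlinarith
    obtain ⟨b, hb⟩ := Int.eq_ofNat_of_zero_le (by omega : (0:ℤ) ≤ x + y')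
    obtain ⟨m, hm1, hm2⟩ := aux_key F hFneg1 hF0 hFrec b x y' hb hx hy'0 (Or.inl hf')
    obtain ⟨k, rfl⟩ := aux_even F hFneg1 hF0 hFrec m x y' hm1 hm2 hf'
    refine ⟨k, Or.inr ⟨by rw [hm1]; push_cast; ring_nf, ?_⟩⟩
    have hs := aux_step F hFneg1 hF0 hFrec (2 * k)
    have e : (2 * (k : ℤ)) = ((2 * k : ℕ) : ℤ) := by push_cast; ring
    rw [e, hs]
    have : y = -x - F ((2 * k : ℕ) : ℤ) := by omega
    rw [this, hm1]
    push_cast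
    ring_nf

end Aux

/-- the pairs `(x,y) ∈ ℤ²` with `-x² + y² + xy = -1` are exactly
`±(F_{2k+1}, F_{2k})` and `±(F_{2k+1}, -F_{2k+2})` for `k ≥ 0`, where `F` is the
Fibonacci sequence extended to all integer indices. -/
theorem stmt_13 (F : ℤ → ℤ) (hFneg1 : F (-1) = 1) (hF0 : F 0 = 0)
    (hFrec : ∀ m : ℤ, F (m + 1) = F m + F (m - 1)) :
    {p : ℤ × ℤ | -p.1 ^ 2 + p.2 ^ 2 + p.1 * p.2 = -1} =
      {p : ℤ × ℤ | ∃ k : ℕ,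
        p = (F (2 * k + 1), F (2 * k)) ∨ p = -(F (2 * k + 1), F (2 * k)) ∨
        p = (F (2 * k + 1), -F (2 * k + 2)) ∨ p = -(F (2 * k + 1), -F (2 * k + 2))} := by
  ext ⟨x, y⟩
  simp only [Set.mem_setOf_eq, Prod.ext_iff, Prod.fst_neg, Prod.snd_neg]
  constructor
  · intro h
    have hf : x ^ 2 - x * y - y ^ 2 = 1 := by linarith
    rcases lt_trichotomy x 0 with hx | hx | hx
    · have hf' : (-x) ^ 2 - (-x) * (-y) - (-y) ^ 2 = 1 := by nlinarith
      obtain ⟨k, hk⟩ := aux_pos F hFneg1 hF0 hFrec (-x) (-y) (by omega) hf'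
      refine ⟨k, ?_⟩
      rcases hk with ⟨h1, h2⟩ | ⟨h1, h2⟩
      · exact Or.inr (Or.inl ⟨by omega, by omega⟩)
      · exact Or.inr (Or.inr (Or.inr ⟨by omega, by omega⟩))
    · exfalso; subst hx; nlinarith
    · obtain ⟨k, hk⟩ := aux_pos F hFneg1 hF0 hFrec x y hx hf
      refine ⟨k, ?_⟩
      rcases hk with ⟨h1, h2⟩ | ⟨h1, h2⟩
      · exact Or.inl ⟨h1, h2⟩
      · exact Or.inr (Or.inr (Or.inl ⟨h1, h2⟩))
  · rintro ⟨k, hk⟩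
    have hid := aux_ident F hFneg1 hF0 hFrec (2 * k)
    have hs := aux_step F hFneg1 hF0 hFrec (2 * k)
    have e : ((2 * k : ℕ) : ℤ) = 2 * (k : ℤ) := by push_cast; ring
    rw [e] at hid hs
    have hpow : ((-1 : ℤ)) ^ (2 * k) = 1 := by
      rw [pow_mul]; norm_num
    rw [hpow] at hid
    rcases hk with ⟨h1, h2⟩ | ⟨h1, h2⟩ | ⟨h1, h2⟩ | ⟨h1, h2⟩ <;>
      (rw [h1, h2]; (try rw [hs]); linear_combination -hid)
end

section
/- The set of pairs (x, y) ∈ ℤ² satisfying x² − y² + xy = −1 is exactly { ±(F_{2k}, F_{2k+1}) : k ≥ 0 } ∪ { ±(−F_{2k+2}, F_{2k+1}) : k ≥ 0 }. -/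
private def fz (n : ℕ) : ℤ := Nat.fib n

private lemma fz_add_two (n : ℕ) : fz (n + 2) = fz (n + 1) + fz n := by
  simp [fz, Nat.fib_add_two]; push_cast; ring

private lemma fz_nonneg (n : ℕ) : 0 ≤ fz n := by
  simp [fz]

private lemma fz_odd_pos (k : ℕ) : 1 ≤ fz (2 * k + 1) := by
  simp only [fz]
  exact_mod_cast Nat.fib_pos.mpr (by omega)

private lemma fz_ident (k : ℕ) :
    fz (2 * k) ^ 2 - fz (2 * k + 1) ^ 2 + fz (2 * k) * fz (2 * k + 1) = -1 := by
  induction k with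
  | zero => norm_num [fz]
  | succ k ih =>
    have e1 : fz (2 * k + 2) = fz (2 * k + 1) + fz (2 * k) := fz_add_two (2 * k)
    have e2 : fz (2 * k + 3) = fz (2 * k + 2) + fz (2 * k + 1) := by
      have := fz_add_two (2 * k + 1)
      convert this using 3 <;> omega
    have h1 : 2 * (k + 1) = 2 * k + 2 := by ring
    rw [h1, show 2*k+2+1 = 2*k+3 from by omega, e1, e2, e1]
    linear_combination ih

private lemma pos_main : ∀ n : ℕ, ∀ y x : ℤ, y.natAbs = n → 0 ≤ y →
    x ^ 2 - y ^ 2 + x * y = -1 →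
    ∃ k : ℕ, (x = fz (2 * k) ∧ y = fz (2 * k + 1)) ∨
      (x = -fz (2 * k + 2) ∧ y = fz (2 * k + 1)) := by
  intro n
  induction n using Nat.strong_induction_on with
  | _ n ih =>
    intro y x hn hy heq
    rcases lt_or_ge y 2 with hy2 | hy2
    · interval_cases y
      · exfalso; nlinarith
      · have hx : x = 0 ∨ x = -1 := by
          have h0 : x * (x + 1) = 0 := by linear_combination heq
          rcases mul_eq_zero.mp h0 with h | h
          · exact Or.inl h
          · exact Or.inr (by omega)
        rcases hx with rfl | rfl
        · exact ⟨0, Or.inl ⟨by norm_num [fz], by norm_num [fz]⟩⟩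
        · exact ⟨0, Or.inr ⟨by norm_num [fz], by norm_num [fz]⟩⟩
    · -- y ≥ 2
      have hposCase : ∀ x : ℤ, 1 ≤ x → x ^ 2 - y ^ 2 + x * y = -1 →
          ∃ k : ℕ, x = fz (2 * k) ∧ y = fz (2 * k + 1) := by
        intro x hx1 heq
        have hxy : x < y := by nlinarith
        have heq' : (2 * x - y) ^ 2 - (y - x) ^ 2 + (2 * x - y) * (y - x) = -1 := by
          linear_combination heq
        have hlt : (y - x).natAbs < n := by omega
        obtain ⟨k, hk⟩ := ih _ hlt (y - x) (2 * x - y) rfl (by omega) heq'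
        rcases hk with ⟨h1, h2⟩ | ⟨h1, h2⟩
        · refine ⟨k + 1, ?_, ?_⟩
          · rw [show 2 * (k + 1) = 2 * k + 2 from by ring, fz_add_two]
            omega
          · rw [show 2 * (k + 1) + 1 = (2 * k + 1) + 2 from by ring, fz_add_two,
                show 2 * k + 1 + 1 = 2 * k + 2 from by omega, fz_add_two]
            omega
        · exfalso
          have h3 := fz_add_two (2 * k)
          have h4 : (0 : ℤ) ≤ fz (2 * k) := fz_nonneg _
          omega
      rcases lt_trichotomy x 0 with hx | hx | hx
      · have hQ : (-x - y) ^ 2 - y ^ 2 + (-x - y) * y = -1 := by linear_combination heq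
        have hpos : 1 ≤ -x - y := by nlinarith
        obtain ⟨k, h1, h2⟩ := hposCase _ hpos hQ
        refine ⟨k, Or.inr ⟨?_, h2⟩⟩
        have h3 := fz_add_two (2 * k)
        omega
      · exfalso; subst hx; nlinarith
      · obtain ⟨k, h1, h2⟩ := hposCase x hx heq
        exact ⟨k, Or.inl ⟨h1, h2⟩⟩

/-- the pairs `(x,y) ∈ ℤ²` with `x² - y² + xy = -1` are exactly
`±(F_{2k}, F_{2k+1})` and `±(-F_{2k+2}, F_{2k+1})` for `k ≥ 0`, where `F` is the
Fibonacci sequence extended to all integer indices. -/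
theorem stmt_14 (F : ℤ → ℤ) (hFneg1 : F (-1) = 1) (hF0 : F 0 = 0)
    (hFrec : ∀ m : ℤ, F (m + 1) = F m + F (m - 1)) :
    {p : ℤ × ℤ | p.1 ^ 2 - p.2 ^ 2 + p.1 * p.2 = -1} =
      {p : ℤ × ℤ | ∃ k : ℕ,
        p = (F (2 * k), F (2 * k + 1)) ∨ p = -(F (2 * k), F (2 * k + 1)) ∨
        p = (-F (2 * k + 2), F (2 * k + 1)) ∨ p = -(-F (2 * k + 2), F (2 * k + 1))} := by
  have hF : ∀ n : ℕ, F n = fz n := by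
    intro n
    induction n using Nat.twoStepInduction with
    | zero => exact_mod_cast hF0.trans (by norm_num [fz])
    | one =>
      have h1 := hFrec 0
      norm_num [hF0, hFneg1] at h1
      exact_mod_cast h1.trans (by norm_num [fz])
    | more n ih1 ih2 =>
      have h := hFrec ((n : ℤ) + 1)
      have e1 : ((n : ℤ) + 1 + 1) = ((n + 2 : ℕ) : ℤ) := by push_cast; ring
      have e2 : ((n : ℤ) + 1 - 1) = ((n : ℕ) : ℤ) := by push_cast; ring
      have e3 : ((n : ℤ) + 1) = ((n + 1 : ℕ) : ℤ) := by push_cast; ring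
      rw [e1, e2, e3] at h
      rw [h, ih1, ih2, fz_add_two]
  have hF1 : ∀ k : ℕ, F (2 * (k : ℤ)) = fz (2 * k) := by
    intro k
    have := hF (2 * k); rwa [show ((2 * k : ℕ) : ℤ) = 2 * (k : ℤ) from by push_cast; ring] at this
  have hF2 : ∀ k : ℕ, F (2 * (k : ℤ) + 1) = fz (2 * k + 1) := by
    intro k
    have := hF (2 * k + 1)
    rwa [show ((2 * k + 1 : ℕ) : ℤ) = 2 * (k : ℤ) + 1 from by push_cast; ring] at this
  have hF3 : ∀ k : ℕ, F (2 * (k : ℤ) + 2) = fz (2 * k + 2) := by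
    intro k
    have := hF (2 * k + 2)
    rwa [show ((2 * k + 2 : ℕ) : ℤ) = 2 * (k : ℤ) + 2 from by push_cast; ring] at this
  ext ⟨x, y⟩
  simp only [Set.mem_setOf_eq, Prod.mk.injEq, Prod.neg_mk, neg_neg]
  constructor
  · intro h
    rcases le_or_gt 0 y with hy | hy
    · obtain ⟨k, hk⟩ := pos_main y.natAbs y x rfl hy h
      refine ⟨k, ?_⟩
      rcases hk with ⟨h1, h2⟩ | ⟨h1, h2⟩
      · exact Or.inl ⟨by rw [hF1 k, h1], by rw [hF2 k, h2]⟩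
      · exact Or.inr (Or.inr (Or.inl ⟨by rw [hF3 k, h1], by rw [hF2 k, h2]⟩))
    · have h' : (-x) ^ 2 - (-y) ^ 2 + (-x) * (-y) = -1 := by linear_combination h
      obtain ⟨k, hk⟩ := pos_main (-y).natAbs (-y) (-x) rfl (by omega) h'
      refine ⟨k, ?_⟩
      rcases hk with ⟨h1, h2⟩ | ⟨h1, h2⟩
      · exact Or.inr (Or.inl ⟨by rw [hF1 k]; omega, by rw [hF2 k]; omega⟩)
      · exact Or.inr (Or.inr (Or.inr ⟨by rw [hF3 k]; omega, by rw [hF2 k]; omega⟩))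
  · rintro ⟨k, hk⟩
    have hid := fz_ident k
    have he2 := fz_add_two (2 * k)
    rcases hk with ⟨h1, h2⟩ | ⟨h1, h2⟩ | ⟨h1, h2⟩ | ⟨h1, h2⟩ <;>
      subst h1 <;> subst h2 <;> simp only [hF1 k, hF2 k, hF3 k] <;>
      first
        | linear_combination hid
        | linear_combination hid + (fz (2*k+2) + fz (2*k)) * he2
end

section
/- Let p > q ≥ 1 be coprime integers with p > 1. Then p² − pq + 1 is not congruent to pq − 1 modulo p², and (p² − pq + 1)(pq − 1) is not congruent to 1 modulo p². In other words, p² − pq + 1 ≢ (pq − 1)^{±1} (mod p²). -/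
lemma key_19 (p q : ℤ) (hp : p > 1) : ¬ (p ^ 2 ∣ 2 * (p * q - 1)) := by
  intro h
  have hp2 : p ∣ 2 := by
    have h1 : p ∣ 2 * (p * q) - 2 * (p * q - 1) := by
      apply dvd_sub
      · exact ⟨2 * q, by ring⟩
      · exact dvd_trans ⟨p, by ring⟩ h
    have : (2 * (p * q) - 2 * (p * q - 1)) = 2 := by ring
    rwa [this] at h1
  have : p ≤ 2 := Int.le_of_dvd (by norm_num) hp2
  have hp2' : p = 2 := by omega
  subst hp2'
  have h4 : (4 : ℤ) ∣ 2 * (2 * q - 1) := by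
    have : ((2:ℤ) ^ 2) = 4 := by norm_num
    rwa [this] at h
  omega

/-- for coprime integers `p > q ≥ 1` with `p > 1`, one has
`p² - pq + 1 ≢ pq - 1 (mod p²)` and `(p² - pq + 1)(pq - 1) ≢ 1 (mod p²)`,
i.e. `p² - pq + 1 ≢ (pq - 1)^{±1} (mod p²)`. -/
theorem stmt_19 (p q : ℤ) (hpq : p > q) (hq : q ≥ 1) (hp : p > 1)
    (hcop : Int.gcd p q = 1) :
    ¬ Int.ModEq (p ^ 2) (p ^ 2 - p * q + 1) (p * q - 1) ∧
      ¬ Int.ModEq (p ^ 2) ((p ^ 2 - p * q + 1) * (p * q - 1)) 1 := by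
  constructor
  · intro h
    have hd := h.dvd
    apply key_19 p q hp
    have h2 : p ^ 2 ∣ (p * q - 1 - (p ^ 2 - p * q + 1)) + p ^ 2 := by
      exact dvd_add hd (dvd_refl _)
    have : (p * q - 1 - (p ^ 2 - p * q + 1)) + p ^ 2 = 2 * (p * q - 1) := by ring
    rwa [this] at h2
  · intro h
    have hd := h.dvd
    apply key_19 p q hp
    have h2 : p ^ 2 ∣ (1 - (p ^ 2 - p * q + 1) * (p * q - 1)) + p ^ 2 * (p * q - q ^ 2 - 1) := by
      exact dvd_add hd ⟨_, rfl⟩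
    have : (1 - (p ^ 2 - p * q + 1) * (p * q - 1)) + p ^ 2 * (p * q - q ^ 2 - 1)
        = -(2 * (p * q - 1)) := by ring
    rw [this] at h2
    exact dvd_neg.mp h2
end
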